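/- Let n ≥ 1 and let p = b/2^k where b ≥ 0 and k ≥ 0 are integers with b ≤ 2^k and 2^k divides n. Then there exists a locally p-biased function f : {-1,1}^n → {-1,1}. -/

import Mathlib

/-- A point of the Boolean hypercube `{-1,1}^n`, encoded inside `Fin n → ℤ`. -/
def IsPMOne {n : ℕ} (x : Fin n → ℤ) : Prop := ∀ i, x i = 1 ∨ x i = -1

/-- `f` is locally `p`-biased: it takes values in `{-1,1}` on the cube, and for every
vertex `x` of the cube, exactly `p·n` of the `n` neighbors of `x` (points differing from
`x` in exactly one coordinate) satisfy `f y = 1`. -/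
def LocallyBiased (n : ℕ) (p : ℝ) (f : (Fin n → ℤ) → ℤ) : Prop :=
  (∀ x : Fin n → ℤ, IsPMOne x → (f x = 1 ∨ f x = -1)) ∧
  ∀ x : Fin n → ℤ, IsPMOne x →
    ((Finset.univ.filter fun i => f (Function.update x i (-(x i))) = 1).card : ℝ) = p * n

theorem fiber_card (n s r : ℕ) (hn : 0 < n) (hr : r < s) (hdvd : s ∣ n) :
    (Finset.univ.filter fun i : Fin n => (i : ℕ) % s = r).card = n / s := by
  have hs : 0 < s := lt_of_le_of_lt (Nat.zero_le r) hr
  rw [show n / s = (Finset.range (n / s)).card from (Finset.card_range _).symm]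
  refine Finset.card_nbij' (fun i => (i : ℕ) / s)
      (fun q => ⟨(q * s + r) % n, Nat.mod_lt _ hn⟩) ?_ ?_ ?_ ?_
  · intro i hi
    simp only [Finset.mem_coe, Finset.mem_filter, Finset.mem_univ, true_and] at hi
    simp only [Finset.mem_coe, Finset.mem_range]
    by_contra h
    push_neg at h
    have : n ≤ (i : ℕ) := le_trans (Nat.div_mul_cancel hdvd ▸ Nat.mul_le_mul_right s h)
      (Nat.div_mul_le_self _ _)
    exact absurd i.isLt (not_lt.mpr this)
  · intro q hq
    simp only [Finset.mem_coe, Finset.mem_range] at hq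
    have hlt : q * s + r < n := by
      obtain ⟨m, rfl⟩ := hdvd
      rw [Nat.mul_div_cancel_left _ hs] at hq
      calc q * s + r < (q + 1) * s := by nlinarith
        _ ≤ m * s := Nat.mul_le_mul_right s hq
        _ = s * m := Nat.mul_comm _ _
    simp only [Finset.mem_coe, Finset.mem_filter, Finset.mem_univ, true_and]
    rw [Nat.mod_eq_of_lt hlt, Nat.add_comm, Nat.add_mul_mod_self_right, Nat.mod_eq_of_lt hr]
  · intro i hi
    simp only [Finset.mem_coe, Finset.mem_filter, Finset.mem_univ, true_and] at hi
    have : (i : ℕ) / s * s + r = (i : ℕ) := by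
      calc (i : ℕ) / s * s + r = s * ((i : ℕ) / s) + (i : ℕ) % s := by rw [Nat.mul_comm, hi]
        _ = (i : ℕ) := Nat.div_add_mod _ _
    apply Fin.ext
    simp [this, Nat.mod_eq_of_lt i.isLt]
  · intro q hq
    simp only [Finset.mem_coe, Finset.mem_range] at hq
    have hlt : q * s + r < n := by
      obtain ⟨m, rfl⟩ := hdvd
      rw [Nat.mul_div_cancel_left _ hs] at hq
      calc q * s + r < (q + 1) * s := by nlinarith
        _ ≤ m * s := Nat.mul_le_mul_right s hq
        _ = s * m := Nat.mul_comm _ _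
    simp only [Nat.mod_eq_of_lt hlt]
    rw [Nat.add_comm, Nat.add_mul_div_right _ _ hs, Nat.div_eq_of_lt hr, Nat.zero_add]

/-- the "column" of coordinate `i`: the binary digits of `i % 2^k` as a vector in `F_2^k`. -/
def col (n k : ℕ) (i : Fin n) : Fin k → Fin 2 :=
  finFunctionFinEquiv.symm ⟨(i : ℕ) % 2 ^ k, Nat.mod_lt _ (by positivity : 0 < 2 ^ k)⟩

/-- the hash of a cube point. -/
def hsum (n k : ℕ) (x : Fin n → ℤ) : Fin k → Fin 2 :=
  ∑ i, if x i = 1 then col n k i else 0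

lemma char2 {k : ℕ} (g : Fin k → Fin 2) : g + g = 0 := by
  funext j
  have : ∀ t : Fin 2, t + t = 0 := by decide
  exact this (g j)

lemma hsum_flip (n k : ℕ) (x : Fin n → ℤ) (hx : IsPMOne x) (i : Fin n) :
    hsum n k (Function.update x i (-(x i))) = hsum n k x + col n k i := by
  unfold hsum
  have e1 : ∀ y : Fin n → ℤ, (∑ j, if y j = 1 then col n k j else 0)
      = (if y i = 1 then col n k i else 0)
        + ∑ j ∈ Finset.univ.erase i, (if y j = 1 then col n k j else 0) :=
    fun y => (Finset.add_sum_erase _ _ (Finset.mem_univ i)).symm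
  rw [e1, e1 x]
  have e2 : ∑ j ∈ Finset.univ.erase i, (if Function.update x i (-(x i)) j = 1 then col n k j else 0)
      = ∑ j ∈ Finset.univ.erase i, (if x j = 1 then col n k j else 0) := by
    refine Finset.sum_congr rfl fun j hj => ?_
    rw [Function.update_of_ne (Finset.ne_of_mem_erase hj)]
  rw [e2, Function.update_self]
  rcases hx i with h1 | h1 <;> rw [h1]
  · rw [if_neg (show ¬-(1:ℤ) = 1 by norm_num), if_pos rfl, zero_add, add_right_comm, char2,
      zero_add]
  · rw [if_pos (show -(-1:ℤ) = 1 by norm_num), if_neg (show ¬(-1:ℤ) = 1 by norm_num),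
      zero_add, add_comm]

lemma ite_eq_one_iff {c : Prop} [Decidable c] : ((if c then (1:ℤ) else -1) = 1) ↔ c := by
  split_ifs with h <;> simp [h]

lemma count_main (n k b : ℕ) (hn : 0 < n) (hb : b ≤ 2 ^ k) (hdvd : 2 ^ k ∣ n)
    (H : Fin k → Fin 2) :
    (Finset.univ.filter fun i : Fin n =>
      ((finFunctionFinEquiv (H + col n k i) : ℕ) < b)).card = b * (n / 2 ^ k) := by
  classical
  set e : (Fin k → Fin 2) ≃ Fin (2 ^ k) := finFunctionFinEquiv with he
  set S : Finset (Fin n) := Finset.univ.filter fun i => ((e (H + col n k i) : ℕ) < b) with hS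
  set T : Finset (Fin (2 ^ k)) := Finset.univ.filter fun t => ((t : ℕ) < b) with hT
  have hmem : ∀ i ∈ S, e (H + col n k i) ∈ T := by
    intro i hi
    simp only [hS, Finset.mem_filter, Finset.mem_univ, true_and] at hi
    simp only [hT, Finset.mem_filter, Finset.mem_univ, true_and]
    exact hi
  rw [Finset.card_eq_sum_card_fiberwise hmem]
  have hfiber : ∀ t ∈ T, (S.filter fun i => e (H + col n k i) = t).card = n / 2 ^ k := by
    intro t ht
    simp only [hT, Finset.mem_filter, Finset.mem_univ, true_and] at ht
    have hSf : (S.filter fun i => e (H + col n k i) = t)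
        = Finset.univ.filter fun i => e (H + col n k i) = t := by
      ext i
      simp only [hS, Finset.mem_filter, Finset.mem_univ, true_and]
      constructor
      · tauto
      · intro h; exact ⟨h ▸ ht, h⟩
    rw [hSf]
    have hψ : ∀ i : Fin n, (e (H + col n k i) = t ↔
        (i : ℕ) % 2 ^ k = ((e (e.symm t - H)) : ℕ)) := by
      intro i
      rw [Equiv.apply_eq_iff_eq_symm_apply]
      rw [show H + col n k i = e.symm t ↔ col n k i = e.symm t - H from by
        constructor <;> intro h
        · rw [← h]; abel
        · rw [h]; abel]
      unfold col
      rw [he, Equiv.symm_apply_eq, Fin.ext_iff]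
    rw [Finset.filter_congr fun i _ => hψ i]
    exact fiber_card n (2 ^ k) _ hn (e (e.symm t - H)).isLt hdvd
  rw [Finset.sum_congr rfl hfiber, Finset.sum_const, smul_eq_mul]
  congr 1
  -- T.card = b
  rw [hT, Finset.card_filter]
  rw [Fin.sum_univ_eq_sum_range (fun j => if j < b then 1 else 0)]
  rw [← Finset.card_filter]
  rw [show (Finset.range (2 ^ k)).filter (fun j => j < b) = Finset.range b from by
    ext j
    simp only [Finset.mem_filter, Finset.mem_range]
    omega]
  exact Finset.card_range b

theorem stmt_1 (n : ℕ) (hn : 1 ≤ n) (b k : ℕ) (hb : b ≤ 2 ^ k) (hdvd : 2 ^ k ∣ n) :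
    ∃ f : (Fin n → ℤ) → ℤ, LocallyBiased n ((b : ℝ) / 2 ^ k) f := by
  classical
  refine ⟨fun x => if ((finFunctionFinEquiv (hsum n k x) : ℕ) < b) then 1 else -1, ?_, ?_⟩
  · intro x _
    dsimp only
    split_ifs <;> simp
  · intro x hx
    have hfilt : (Finset.univ.filter fun i : Fin n =>
        (if ((finFunctionFinEquiv (hsum n k (Function.update x i (-(x i)))) : ℕ) < b)
          then (1:ℤ) else -1) = 1)
        = Finset.univ.filter fun i : Fin n =>
          ((finFunctionFinEquiv (hsum n k x + col n k i) : ℕ) < b) := by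
      refine Finset.filter_congr fun i _ => ?_
      rw [ite_eq_one_iff, hsum_flip n k x hx i]
    dsimp only
    rw [hfilt, count_main n k b hn hb hdvd (hsum n k x)]
    obtain ⟨m, hm⟩ := hdvd
    have h2k : (0:ℝ) < (2:ℝ) ^ k := by positivity
    rw [hm, Nat.mul_div_cancel_left _ (by positivity : 0 < 2 ^ k)]
    push_cast
    field_simp
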